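/- Let A be a semisimple complex unital Banach algebra and let a, b ∈ A satisfy σ(a·x) = σ(b·x) for all x ∈ A. If a is a unit-regular element (i.e., a = e·t for some idempotent e ∈ A and some invertible t ∈ A), then a = b. -/

import Mathlib

section helpers
variable {A : Type*} [NormedRing A] [NormedAlgebra ℂ A] [CompleteSpace A]

private lemma junit {A : Type*} [Ring A] [Algebra ℂ A] (x y : A) :
    IsUnit (1 - x * y) ↔ IsUnit (1 - y * x) := by
  have h1 : ((1 : ℂˣ) : ℂ) ∈ spectrum ℂ (x * y) ↔ ((1 : ℂˣ) : ℂ) ∈ spectrum ℂ (y * x) :=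
    spectrum.unit_mem_mul_comm
  rw [spectrum.mem_iff, spectrum.mem_iff] at h1
  simp only [Units.val_one, map_one] at h1
  exact not_iff_not.mp h1

private lemma unit_one_sub_iff {A : Type*} [Ring A] [Algebra ℂ A] (x : A) :
    IsUnit (1 - x) ↔ (1 : ℂ) ∉ spectrum ℂ x := by
  rw [spectrum.notMem_iff, map_one]

private lemma notmem_iff_smul {A : Type*} [Ring A] [Algebra ℂ A] (μ : ℂ) (x : A) :
    μ ∉ spectrum ℂ x ↔ IsUnit (μ • (1 : A) - x) := by
  rw [spectrum.notMem_iff, Algebra.algebraMap_eq_smul_one]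

private lemma spec_eq_zero [NormOneClass A] (x : A)
    (h : ∀ μ : ℂ, μ ≠ 0 → IsUnit (μ • (1 : A) - x)) : spectrum ℂ x = {0} := by
  haveI : Nontrivial A := ⟨1, 0, fun h1 => by simpa [h1] using (norm_one : ‖(1:A)‖ = 1)⟩
  rw [Set.eq_singleton_iff_nonempty_unique_mem]
  refine ⟨spectrum.nonempty x, fun μ hμ => ?_⟩
  by_contra hne
  exact (notmem_iff_smul μ x).mpr (h μ hne) hμ

private lemma sq_zero_spec [NormOneClass A] (x : A) (hx : x * x = 0) :
    spectrum ℂ x = {0} := by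
  apply spec_eq_zero
  intro μ hμ
  refine ⟨⟨μ • (1:A) - x, μ⁻¹ • (1:A) + (μ⁻¹*μ⁻¹) • x, ?_, ?_⟩, rfl⟩ <;>
  · simp only [sub_mul, mul_sub, mul_add, add_mul, smul_mul_assoc, mul_smul_comm,
      one_mul, mul_one, smul_smul, hx, smul_zero]
    match_scalars <;> field_simp <;> ring
private lemma mul_corner {A : Type*} [Ring A] (e s v : A) (he : e * e = e)
    (hv : v * e = e * v) :
    (1 - e + e * v) * (1 - e + e * s) = 1 - e + e * (v * s) := by
  have h1 : e * v * e = e * (e * v) := by rw [mul_assoc, hv]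
  have h2 : e * v * (e * s) = e * (v * s) := by
    rw [← mul_assoc, h1, ← mul_assoc, he, mul_assoc]
  calc (1 - e + e * v) * (1 - e + e * s)
      = (1 - e) * (1 - e) + (1 - e) * (e * s) + (e * v * (1 - e) + e * v * (e * s)) := by
        simp only [add_mul, mul_add]; abel
    _ = 1 - e + e * (v * s) := by
        rw [h2]
        have h3 : (1 - e) * (1 - e) = 1 - e := by
          simp only [sub_mul, mul_sub, one_mul, mul_one, he]; abel
        have h4 : (1 - e) * (e * s) = 0 := by
          rw [← mul_assoc, sub_mul, one_mul, he, sub_self, zero_mul]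
        have h5 : e * v * (1 - e) = 0 := by
          rw [mul_sub, mul_one, h1, ← mul_assoc, he, sub_self]
        rw [h3, h4, h5]; abel

private lemma idem_unit {A : Type*} [Ring A] [Algebra ℂ A] (e : A) (he : e * e = e)
    {μ : ℂ} (h0 : μ ≠ 0) (h1 : μ ≠ 1) : IsUnit (μ • (1:A) - e) := by
  refine ⟨⟨μ • (1:A) - e, μ⁻¹ • (1:A) + (μ⁻¹ * (μ-1)⁻¹) • e, ?_, ?_⟩, rfl⟩ <;>
  · simp only [sub_mul, mul_sub, mul_add, add_mul, smul_mul_assoc, mul_smul_comm,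
      one_mul, mul_one, smul_smul, he]
    have hμ1 : μ - 1 ≠ 0 := sub_ne_zero.mpr h1
    match_scalars <;> field_simp <;> ring
end helpers
/-- Theorem 2.4: In a semisimple complex unital Banach algebra, if
`σ(a x) = σ(b x)` for all `x` and `a` is unit-regular (a product of an
idempotent and an invertible element), then `a = b`. -/
theorem eq_of_spectrum_mul_eq_of_unitRegular
    {A : Type*} [NormedRing A] [NormedAlgebra ℂ A] [CompleteSpace A] [NormOneClass A]
    (hss : ∀ a : A, (∀ x : A, spectrum ℂ (a * x) = {0}) → a = 0)
    (a b : A)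
    (h : ∀ x : A, spectrum ℂ (a * x) = spectrum ℂ (b * x))
    (hur : ∃ e t : A, e * e = e ∧ IsUnit t ∧ a = e * t) :
    a = b := by
  haveI : Nontrivial A := ⟨1, 0, fun h1 => by simpa [h1] using (norm_one : ‖(1:A)‖ = 1)⟩
  obtain ⟨e, t, he, ht, hat⟩ := hur
  obtain ⟨tu, rfl⟩ := ht
  obtain ⟨c, hcdef⟩ : ∃ c : A, c = b * ↑tu⁻¹ := ⟨_, rfl⟩
  have H : ∀ y : A, spectrum ℂ (e * y) = spectrum ℂ (c * y) := by
    intro y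
    have h2 := h ((↑tu⁻¹ : A) * y)
    rw [hat] at h2
    calc spectrum ℂ (e * y) = spectrum ℂ (e * ↑tu * (↑tu⁻¹ * y)) := by
          rw [mul_assoc, ← mul_assoc (↑tu : A), Units.mul_inv, one_mul]
      _ = spectrum ℂ (b * (↑tu⁻¹ * y)) := h2
      _ = spectrum ℂ (c * y) := by rw [hcdef, mul_assoc]
  have h1e : e * (1 - e) = 0 := by rw [mul_sub, mul_one, he, sub_self]
  have he1 : (1 - e) * e = 0 := by rw [sub_mul, one_mul, he, sub_self]
  -- Step 1 : c * (1 - e) = 0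
  have S1 : c * (1 - e) = 0 := by
    apply hss
    intro z
    have h0 : e * ((1 - e) * z) = 0 := by rw [← mul_assoc, h1e, zero_mul]
    have h2 := H ((1 - e) * z)
    rw [h0, spectrum.zero_eq] at h2
    rw [mul_assoc]
    exact h2.symm
  -- Step 2 : (1 - e) * c = 0
  have S2 : (1 - e) * c = 0 := by
    apply hss
    intro z
    rw [mul_assoc]
    have hsub : spectrum ℂ ((1 - e) * (c * z)) ⊆ {0} := by
      intro μ hμ
      rw [Set.mem_singleton_iff]
      by_contra hne
      have hmem : μ ∈ spectrum ℂ ((c * z) * (1 - e)) := by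
        have hd := spectrum.nonzero_mul_comm (𝕜 := ℂ) (1 - e) (c * z)
        have : μ ∈ spectrum ℂ ((1 - e) * (c * z)) \ {0} := ⟨hμ, by simpa using hne⟩
        exact (hd ▸ this).1
      rw [mul_assoc, ← H (z * (1 - e))] at hmem
      have hnil : (e * (z * (1 - e))) * (e * (z * (1 - e))) = 0 := by
        have k1 : (1 - e) * (e * (z * (1 - e))) = 0 := by rw [← mul_assoc, he1, zero_mul]
        calc (e * (z * (1 - e))) * (e * (z * (1 - e)))
            = e * (z * ((1 - e) * (e * (z * (1 - e))))) := by
              simp only [mul_assoc]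
          _ = 0 := by rw [k1, mul_zero, mul_zero]
      rw [sq_zero_spec _ hnil] at hmem
      exact hne hmem
    obtain ⟨ν, hν⟩ := spectrum.nonempty ((1 - e) * (c * z))
    have hν0 : ν = 0 := hsub hν
    exact Set.eq_singleton_iff_unique_mem.mpr ⟨hν0 ▸ hν, fun μ hμ => hsub hμ⟩
  have hce : c * e = c := by
    have h' := S1
    rw [mul_sub, mul_one] at h'
    exact (sub_eq_zero.mp h').symm
  have hec : e * c = c := by
    have : c - e * c = 0 := by rwa [sub_mul, one_mul] at S2
    exact (sub_eq_zero.mp this).symm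
  obtain ⟨q, hq⟩ : ∃ q : A, q = e - c := ⟨_, rfl⟩
  have heq : e * q = q := by rw [hq, mul_sub, he, hec]
  have hqe : q * e = q := by rw [hq, sub_mul, he, hce]
  -- spectra of c and e
  have hspec_ce : spectrum ℂ c = spectrum ℂ e := by
    have := H 1; rw [mul_one, mul_one] at this; exact this.symm
  have hspec_e : spectrum ℂ e ⊆ {0, 1} := by
    intro μ hμ
    by_contra hne
    simp only [Set.mem_insert_iff, Set.mem_singleton_iff, not_or] at hne
    exact (notmem_iff_smul μ e).mpr (idem_unit e he hne.1 hne.2) hμ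
  have hspec_c : spectrum ℂ c ⊆ {0, 1} := hspec_ce ▸ hspec_e
  -- σ(q) ⊆ {0}
  have hspec_q : spectrum ℂ q ⊆ {0} := by
    have hcq : c * q = c - c * c := by rw [hq, mul_sub, hce]
    have hEq : spectrum ℂ q = spectrum ℂ (c - c * c) := by
      have := H q; rwa [heq, hcq] at this
    intro μ hμ
    rw [Set.mem_singleton_iff]
    by_contra hne
    rw [hEq] at hμ
    apply (notmem_iff_smul μ _).mpr ?_ hμ
    obtain ⟨s, hs⟩ := IsAlgClosed.exists_pow_nat_eq (k := ℂ) (1 - 4 * μ) (n := 2) two_pos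
    set α : ℂ := (1 + s) / 2 with hα
    set β : ℂ := (1 - s) / 2 with hβ
    have hsum : α + β = 1 := by rw [hα, hβ]; ring
    have hprod : α * β = μ := by
      rw [hα, hβ]
      have : s * s = 1 - 4 * μ := by rw [← hs]; ring
      field_simp
      linear_combination -this
    have hα0 : α ≠ 0 := fun h0 => hne (by rw [← hprod, h0, zero_mul])
    have hβ0 : β ≠ 0 := fun h0 => hne (by rw [← hprod, h0, mul_zero])
    have hα1 : α ≠ 1 := by
      intro h1
      have hb : β = 0 := by rw [h1] at hsum; linear_combination hsum
      exact hβ0 hb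
    have hβ1 : β ≠ 1 := by
      intro h1
      have : α = 0 := by rw [h1] at hsum; linear_combination hsum
      exact hα0 this
    have hαc : IsUnit (α • (1:A) - c) :=
      (notmem_iff_smul α c).mp (fun hmem => by
        rcases hspec_c hmem with h' | h' <;> [exact hα0 h'; exact hα1 h'])
    have hβc : IsUnit (β • (1:A) - c) :=
      (notmem_iff_smul β c).mp (fun hmem => by
        rcases hspec_c hmem with h' | h' <;> [exact hβ0 h'; exact hβ1 h'])
    have factor : (α • (1:A) - c) * (β • (1:A) - c) = μ • (1:A) - (c - c * c) := by
      simp only [sub_mul, mul_sub, smul_mul_assoc, mul_smul_comm, one_mul, mul_one, smul_smul]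
      match_scalars
      · linear_combination hprod
      · linear_combination hsum
      · ring
    exact factor ▸ hαc.mul hβc
  -- d := 1 - q is invertible
  have hd : IsUnit (1 - q) :=
    (unit_one_sub_iff q).mpr (fun hmem => one_ne_zero (Set.mem_singleton_iff.mp (hspec_q hmem)))
  obtain ⟨du, hdu⟩ : ∃ du : Aˣ, (↑du : A) = 1 - q := ⟨hd.unit, hd.unit_spec⟩
  have hed : e * ↑du = c := by rw [hdu, mul_sub, mul_one, heq, hq]; abel
  have hde : (↑du : A) * e = c := by rw [hdu, sub_mul, one_mul, hqe, hq]; abel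
  have hcomm_e : Commute e (↑du : A) := (hed.trans hde.symm : e * ↑du = ↑du * e)
  have hcomm_e_inv : e * (↑du⁻¹ : A) = ↑du⁻¹ * e := hcomm_e.units_inv_right
  have hqq : q * (1 - q) = (1 - q) * q := by rw [mul_sub, sub_mul, mul_one, one_mul]
  have hcomm_q : Commute q (↑du : A) := by
    show q * ↑du = ↑du * q
    rw [hdu]; exact hqq
  have hcomm_q_inv : q * (↑du⁻¹ : A) = ↑du⁻¹ * q := hcomm_q.units_inv_right
  obtain ⟨q', hq'def⟩ : ∃ q' : A, q' = ↑du⁻¹ * q := ⟨_, rfl⟩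
  have heq' : e * q' = q' := by
    rw [hq'def, ← mul_assoc, hcomm_e_inv, mul_assoc, heq]
  have hq'e : q' * e = q' := by rw [hq'def, mul_assoc, hqe]
  have hdq' : (↑du : A) * q' = q := by rw [hq'def, ← mul_assoc, Units.mul_inv, one_mul]
  -- star
  have star : ∀ w : A, e * w = w → spectrum ℂ ((↑du : A) * w) = spectrum ℂ w := by
    intro w hw
    have h2 := H w
    rw [hw] at h2
    have h3 : c * w = ↑du * w := by rw [← hde, mul_assoc, hw]
    rw [h3] at h2
    exact h2.symm
  -- tied claim
  have T : ∀ w : A, e * w = w → (IsUnit (1 - w + q') ↔ IsUnit (1 - w)) := by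
    intro w hw
    have key : (↑du : A) * (1 - w + q') = 1 - ↑du * w := by
      rw [mul_add, mul_sub, mul_one, hdq', hdu]; abel
    constructor
    · intro hu
      have h1 : IsUnit ((↑du : A) * (1 - w + q')) := (Units.isUnit_units_mul du _).mpr hu
      rw [key] at h1
      rw [unit_one_sub_iff] at h1 ⊢
      rwa [star w hw] at h1
    · intro hu
      have h1 : IsUnit (1 - (↑du : A) * w) := by
        rw [unit_one_sub_iff, star w hw, ← unit_one_sub_iff]; exact hu
      rw [← key] at h1
      exact (Units.isUnit_units_mul du _).mp h1
  -- Lemma C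
  have LC : ∀ z : A, e * z = z → z * e = z → IsUnit (1 - z) → IsUnit (1 - q * z) := by
    intro z hez hze hs
    obtain ⟨su, hsuv⟩ : ∃ su : Aˣ, (↑su : A) = 1 - z := ⟨hs.unit, hs.unit_spec⟩
    have hse : Commute e (↑su : A) := by
      rw [Commute, SemiconjBy, hsuv, mul_sub, sub_mul, mul_one, one_mul, hez, hze]
    have hsei : e * (↑su⁻¹ : A) = ↑su⁻¹ * e := hse.units_inv_right
    have inner : IsUnit (1 - e + e * ↑su⁻¹) := by
      refine ⟨⟨1 - e + e * ↑su⁻¹, 1 - e + e * ↑su, ?_, ?_⟩, rfl⟩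
      · rw [mul_corner e (↑su) (↑su⁻¹) he hsei.symm, Units.inv_mul, mul_one]; abel
      · rw [mul_corner e (↑su⁻¹) (↑su) he hse.symm, Units.mul_inv, mul_one]; abel
    have hcu : IsUnit (1 - c * (1 - ↑su⁻¹)) := by
      rw [unit_one_sub_iff, ← H (1 - ↑su⁻¹)]
      rw [← unit_one_sub_iff]
      have : (1:A) - e * (1 - ↑su⁻¹) = 1 - e + e * ↑su⁻¹ := by rw [mul_sub, mul_one]; abel
      rw [this]
      exact inner
    have factor : (1 - c * (1 - ↑su⁻¹)) * ↑su = 1 - q * z := by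
      have k1 : ((1:A) - ↑su⁻¹) * ↑su = ↑su - 1 := by rw [sub_mul, one_mul, Units.inv_mul]
      have k2 : (1 - c * (1 - ↑su⁻¹)) * ↑su = ↑su - c * (↑su - 1) := by
        rw [sub_mul, one_mul, mul_assoc, k1]
      rw [k2, hsuv]
      have k3 : q * z = z - c * z := by rw [hq, sub_mul, hez]
      rw [k3, mul_sub, mul_sub, mul_one]
      abel
    rw [← factor]
    exact hcu.mul su.isUnit
  -- Lemma D
  have LD : ∀ (z : A) (μ : ℂ), e * z = z → z * e = z → μ ∉ spectrum ℂ z →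
      IsUnit (1 - e + e * (μ • (1:A) - z)) := by
    intro z μ hez hze hμ
    have hw : IsUnit (μ • (1:A) - z) := (notmem_iff_smul μ z).mp hμ
    obtain ⟨wu, hwv⟩ : ∃ wu : Aˣ, (↑wu : A) = μ • (1:A) - z := ⟨hw.unit, hw.unit_spec⟩
    have hcw : Commute e (↑wu : A) := by
      rw [Commute, SemiconjBy, hwv, mul_sub, sub_mul, mul_smul_comm, smul_mul_assoc,
        mul_one, one_mul, hez, hze]
    have hcwi : e * (↑wu⁻¹ : A) = ↑wu⁻¹ * e := hcw.units_inv_right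
    have : IsUnit (1 - e + e * ↑wu) := by
      refine ⟨⟨1 - e + e * ↑wu, 1 - e + e * ↑wu⁻¹, ?_, ?_⟩, rfl⟩
      · rw [mul_corner e (↑wu⁻¹) (↑wu) he hcw.symm, Units.mul_inv, mul_one]; abel
      · rw [mul_corner e (↑wu) (↑wu⁻¹) he hcwi.symm, Units.inv_mul, mul_one]; abel
    rwa [hwv] at this
  -- LC''
  have LC2 : ∀ u : A, e * u = u → u * e = u → IsUnit (1 - u) → IsUnit (1 - q' * u) := by
    intro u heu hue hu
    have h1 : IsUnit (1 - q * u) := LC u heu hue hu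
    have h2 : q * u = ↑du * (q' * u) := by rw [← mul_assoc, hdq']
    rw [h2, unit_one_sub_iff, star (q' * u) (by rw [← mul_assoc, heq'])] at h1
    rwa [unit_one_sub_iff]
  -- main corner claim
  have main' : ∀ z : A, e * z = z → z * e = z → IsUnit (1 - q' * z) := by
    intro z hez hze
    obtain ⟨n, hn⟩ : ∃ n : ℕ, n = ⌊‖z‖⌋₊ + 1 := ⟨_, rfl⟩
    have hnot : ((n : ℂ) + 1) ∉ spectrum ℂ z := by
      intro hmem
      have hle := spectrum.norm_le_norm_of_mem hmem
      have hnorm : ‖((n : ℂ) + 1)‖ = (n : ℝ) + 1 := by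
        rw [show ((n : ℂ) + 1) = ((n + 1 : ℕ) : ℂ) by push_cast; ring]
        rw [Complex.norm_natCast]; push_cast; ring
      rw [hnorm] at hle
      have hfl : ‖z‖ < (⌊‖z‖⌋₊ : ℝ) + 1 := Nat.lt_floor_add_one _
      have : (n : ℝ) = (⌊‖z‖⌋₊ : ℝ) + 1 := by rw [hn]; push_cast; ring
      linarith
    have hcor1 : e * (z - (n : ℂ) • e) = z - (n : ℂ) • e := by
      rw [mul_sub, mul_smul_comm, he, hez]
    have hcor2 : (z - (n : ℂ) • e) * e = z - (n : ℂ) • e := by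
      rw [sub_mul, smul_mul_assoc, he, hze]
    have hstart0 : IsUnit (1 - (z - (n : ℂ) • e)) := by
      have h1 := LD z ((n : ℂ) + 1) hez hze hnot
      have h2 : (1:A) - e + e * (((n : ℂ) + 1) • (1:A) - z) = 1 - (z - (n : ℂ) • e) := by
        rw [mul_sub, mul_smul_comm, mul_one, hez, add_smul, one_smul]
        abel
      rwa [h2] at h1
    have hstart : IsUnit (1 - q' * z + (n : ℂ) • q') := by
      have h1 := LC2 (z - (n : ℂ) • e) hcor1 hcor2 hstart0
      have h2 : q' * (z - (n : ℂ) • e) = q' * z - (n : ℂ) • q' := by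
        rw [mul_sub, mul_smul_comm, hq'e]
      rw [h2, show (1:A) - (q' * z - (n : ℂ) • q') = 1 - q' * z + (n : ℂ) • q' by abel] at h1
      exact h1
    have ind : ∀ m : ℕ, IsUnit (1 - q' * z + (m : ℂ) • q') → IsUnit (1 - q' * z) := by
      intro m
      induction m with
      | zero => intro h0; simpa using h0
      | succ k ih =>
        intro hk
        apply ih
        have hw : e * (q' * z - (k : ℂ) • q') = q' * z - (k : ℂ) • q' := by
          rw [mul_sub, ← mul_assoc, heq', mul_smul_comm, heq']
        have hT := T (q' * z - (k : ℂ) • q') hw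
        have e1 : (1:A) - (q' * z - (k : ℂ) • q') + q' = 1 - q' * z + ((k : ℕ) + 1 : ℂ) • q' := by
          rw [add_smul, one_smul]; abel
        have e2 : (1:A) - (q' * z - (k : ℂ) • q') = 1 - q' * z + (k : ℂ) • q' := by abel
        rw [e1, e2] at hT
        apply hT.mp
        rw [show (((k : ℕ) + 1 : ℂ)) = ((k + 1 : ℕ) : ℂ) by push_cast; ring]
        exact hk
    exact ind n hstart
  -- corner claim for q
  have mainq : ∀ z : A, e * z = z → z * e = z → IsUnit (1 - q * z) := by
    intro z hez hze
    have h1 := main' z hez hze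
    rw [unit_one_sub_iff] at h1 ⊢
    rw [show q * z = ↑du * (q' * z) by rw [← mul_assoc, hdq'],
      star (q' * z) (by rw [← mul_assoc, heq'])]
    exact h1
  -- all x
  have allx : ∀ x : A, IsUnit (1 - q * x) := by
    intro x
    have hz1 : e * (e * x * e) = e * x * e := by
      rw [← mul_assoc, ← mul_assoc, he]
    have hz2 : (e * x * e) * e = e * x * e := by rw [mul_assoc, he]
    have hcorner : IsUnit (1 - q * (e * x * e)) := mainq (e * x * e) hz1 hz2
    have h2 : q * (e * x * e) = q * x * e := by rw [← mul_assoc, ← mul_assoc, hqe]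
    rw [h2] at hcorner
    have h3 : IsUnit (1 - e * (q * x)) := (junit (q * x) e).mp hcorner
    rwa [← mul_assoc, heq] at h3
  -- spectrum of q * x
  have qspec : ∀ x : A, spectrum ℂ (q * x) = {0} := by
    intro x
    apply spec_eq_zero
    intro μ hμ
    have h1 : IsUnit (1 - q * (μ⁻¹ • x)) := allx _
    have h2 : μ • ((1:A) - q * (μ⁻¹ • x)) = μ • (1:A) - q * x := by
      rw [smul_sub, mul_smul_comm, smul_smul, mul_inv_cancel₀ hμ, one_smul]
    have h3 := (isUnit_smul_iff (Units.mk0 μ hμ) ((1:A) - q * (μ⁻¹ • x))).mpr h1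
    rw [Units.smul_def, Units.val_mk0, h2] at h3
    exact h3
  have hq0 : q = 0 := hss q qspec
  have hce' : c = e := by
    rw [hq] at hq0
    exact (sub_eq_zero.mp hq0).symm
  rw [hat, ← hce', hcdef, mul_assoc, Units.inv_mul, mul_one]
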